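/- For N > 1, in the Lie algebra of derivations of K[[X]] (one variable, so n = 1), the bracket of the subspace (S_N ⊕ S_{N+1})·d/dX with m·d/dX equals m^N·d/dX, where S_k is the span of X^k. -/

import Mathlib

open PowerSeries

lemma deriv_X_pow (K : Type*) [Field K] (n : ℕ) :
    derivative K ((X : PowerSeries K) ^ n) = (n : PowerSeries K) * X ^ (n - 1) := by
  rw [Derivation.leibniz_pow, derivative_X, smul_eq_mul, mul_one, nsmul_eq_mul]

lemma coeff_X_mul_deriv (K : Type*) [Field K] (v : PowerSeries K) (n : ℕ) :
    coeff n (X * derivative K v) = n * coeff n v := by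
  cases n with
  | zero => simp [coeff_zero_eq_constantCoeff]
  | succ k =>
    rw [coeff_succ_X_mul, coeff_derivative]
    push_cast; ring

set_option maxHeartbeats 1000000 in
theorem bracket_span_eq_mN
    (K : Type*) [Field K] [CharZero K] (N : ℕ) (hN : 1 < N) :
    Submodule.span K {h : PowerSeries K |
        ∃ f ∈ Submodule.span K ({X ^ N, X ^ (N + 1)} : Set (PowerSeries K)),
        ∃ g ∈ (Ideal.span {(X : PowerSeries K)}).restrictScalars K,
          h = f * (derivative K g) - g * (derivative K f)}
      = (Ideal.span {(X : PowerSeries K) ^ N}).restrictScalars K := by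
  obtain ⟨M, rfl⟩ : ∃ M, N = M + 2 := ⟨N - 2, by omega⟩
  apply le_antisymm
  · rw [Submodule.span_le]
    rintro h ⟨f, hf, g, hg, rfl⟩
    simp only [Submodule.restrictScalars_mem, Ideal.mem_span_singleton,
      SetLike.mem_coe] at hg ⊢
    obtain ⟨w, rfl⟩ := hg
    rw [Submodule.mem_span_pair] at hf
    obtain ⟨a, b, rfl⟩ := hf
    apply dvd_sub
    · apply dvd_mul_of_dvd_left
      refine dvd_add ?_ ?_
      · rw [smul_eq_C_mul]; exact dvd_mul_left _ _
      · exact ⟨(C b) * X, by rw [smul_eq_C_mul, pow_succ]; ring⟩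
    · have hdf : (X : PowerSeries K) ^ (M + 1) ∣
          derivative K (a • X ^ (M + 2) + b • X ^ (M + 2 + 1)) := by
        rw [map_add, Derivation.map_smul, Derivation.map_smul, deriv_X_pow, deriv_X_pow]
        refine dvd_add ?_ ?_
        · rw [smul_eq_C_mul]
          exact Dvd.dvd.mul_left (dvd_mul_left _ _) _
        · rw [smul_eq_C_mul]
          refine Dvd.dvd.mul_left (Dvd.dvd.mul_left ?_ _) _
          exact pow_dvd_pow _ (by omega)
      obtain ⟨t, ht⟩ := hdf
      exact ⟨w * t, by rw [ht]; ring⟩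
  · rintro h hh
    simp only [Submodule.restrictScalars_mem, Ideal.mem_span_singleton] at hh
    obtain ⟨u, rfl⟩ := hh
    set c := coeff (M + 1) u with hc
    set v : PowerSeries K := mk fun k => if k + 1 = M + 2 then 0
        else coeff k u / ((k : K) + 1 - (M + 2)) with hv
    have key : X * derivative K v + ((1 : K) - (M + 2)) • v
        = u - c • X ^ (M + 1) := by
      ext n
      rw [map_add, map_sub, coeff_X_mul_deriv, map_smul, map_smul, hv, coeff_mk,
        smul_eq_mul, smul_eq_mul]
      by_cases hn : n + 1 = M + 2
      · have hn' : n = M + 1 := by omega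
        subst hn'
        rw [if_pos rfl, coeff_X_pow, if_pos rfl, hc]
        ring
      · rw [if_neg hn, coeff_X_pow, if_neg (by omega)]
        have hne : (n : K) + 1 - ((M : K) + 2) ≠ 0 := by
          have h2 : ((n + 1 : ℕ) : K) ≠ ((M + 2 : ℕ) : K) :=
            fun h => hn (Nat.cast_injective h)
          push_cast at h2
          intro h0; exact h2 (by linear_combination h0)
        field_simp
        ring
    have hB1 : X ^ (M + 2) * derivative K (X * v) - (X * v) * derivative K (X ^ (M + 2))
        = X ^ (M + 2) * u - c • X ^ (2 * M + 3) := by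
      have h3 := congrArg (fun z => X ^ (M + 2) * z) key
      rw [mul_add, mul_smul_comm, mul_sub, mul_smul_comm] at h3
      rw [smul_eq_C_mul, smul_eq_C_mul] at h3
      rw [map_sub, map_one,
        show ((M : K) + 2) = ((M + 2 : ℕ) : K) by push_cast; ring, map_natCast] at h3
      rw [Derivation.leibniz, derivative_X, deriv_X_pow, smul_eq_mul, smul_eq_mul, mul_one,
        show M + 2 - 1 = M + 1 from rfl, smul_eq_C_mul]
      linear_combination h3
    have hB2 : X ^ (M + 2 + 1) * derivative K (X ^ (M + 1))
          - X ^ (M + 1) * derivative K (X ^ (M + 2 + 1))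
        = (-2 : K) • X ^ (2 * M + 3) := by
      rw [deriv_X_pow, deriv_X_pow, smul_eq_C_mul, map_neg, map_ofNat,
        show M + 1 - 1 = M from rfl, show M + 2 + 1 - 1 = M + 2 from rfl]
      push_cast
      ring
    have h1 : X ^ (M + 2) * derivative K (X * v) - (X * v) * derivative K (X ^ (M + 2))
        ∈ Submodule.span K {h : PowerSeries K |
          ∃ f ∈ Submodule.span K ({X ^ (M + 2), X ^ (M + 2 + 1)} : Set (PowerSeries K)),
          ∃ g ∈ (Ideal.span {(X : PowerSeries K)}).restrictScalars K,
            h = f * (derivative K g) - g * (derivative K f)} :=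
      Submodule.subset_span ⟨X ^ (M + 2), Submodule.subset_span (Set.mem_insert _ _),
        X * v, Ideal.mem_span_singleton.mpr ⟨v, rfl⟩, rfl⟩
    have h2 : X ^ (M + 2 + 1) * derivative K (X ^ (M + 1))
          - X ^ (M + 1) * derivative K (X ^ (M + 2 + 1))
        ∈ Submodule.span K {h : PowerSeries K |
          ∃ f ∈ Submodule.span K ({X ^ (M + 2), X ^ (M + 2 + 1)} : Set (PowerSeries K)),
          ∃ g ∈ (Ideal.span {(X : PowerSeries K)}).restrictScalars K,
            h = f * (derivative K g) - g * (derivative K f)} :=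
      Submodule.subset_span ⟨X ^ (M + 2 + 1),
        Submodule.subset_span (Set.mem_insert_of_mem _ rfl),
        X ^ (M + 1), Ideal.mem_span_singleton.mpr (dvd_pow_self X (Nat.succ_ne_zero M)), rfl⟩
    have hfin : X ^ (M + 2) * u
        = (X ^ (M + 2) * derivative K (X * v) - (X * v) * derivative K (X ^ (M + 2)))
          + (-(c / 2)) • (X ^ (M + 2 + 1) * derivative K (X ^ (M + 1))
              - X ^ (M + 1) * derivative K (X ^ (M + 2 + 1))) := by
      rw [hB1, hB2, smul_smul, show (-(c / 2) * (-2) : K) = c by field_simp,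
        sub_add_cancel]
    rw [hfin]
    exact Submodule.add_mem _ h1 (Submodule.smul_mem _ _ h2)
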